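/- Let $(M_\infty, \rho_\infty, \nu_\infty)$ be a metric measure space with heat kernel $p_\infty$, and suppose the ball-localized Dirichlet heat kernels $H_{R}$ on $B_\infty(y,R)$ (extended by zero) satisfy $p_\infty(x,y,t) - M_R \le H_R(x,y,t) \le p_\infty(x,y,t)$ where $M_R = \sup\{p_\infty(x,y,t): x \in \partial B_\infty(y,R), 0<t\le T\}$, and $p_\infty$ satisfies the Gaussian upper bound $p_\infty(x,y,t) \le C(n)\nu_\infty(B_\infty(y,\sqrt t))^{-1}e^{-\rho_\infty(x,y)^2/(5t)}$ with $\nu_\infty$ doubling and $\nu_\infty(B_\infty(y,1))=1$. Then $\|H_R(\cdot,y,t) - p_\infty(\cdot,y,t)\|_{L^1(\nu_\infty)} \le \epsilon(n,T,R)$ with $\lim_{R\to\infty}\epsilon(n,T,R) = 0$, uniformly for $t \in (0,T]$. -/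

import Mathlib

open MeasureTheory Metric Set Real Filter
open scoped ENNReal NNReal
set_option maxHeartbeats 2000000

private lemma aux_pow2 {r : ℝ} (hr : 1 ≤ r) : ∃ k : ℕ, r ≤ 2 ^ k ∧ (2:ℝ) ^ k ≤ 4 * r := by
  have hc1 : 1 ≤ ⌈r⌉₊ := Nat.ceil_pos.mpr (by linarith)
  refine ⟨Nat.log 2 ⌈r⌉₊ + 1, ?_, ?_⟩
  · have h := Nat.lt_pow_succ_log_self (by norm_num : 1 < 2) ⌈r⌉₊
    have h2 : r ≤ (⌈r⌉₊ : ℝ) := Nat.le_ceil r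
    have h3 : ((⌈r⌉₊ : ℕ) : ℝ) ≤ ((2 ^ (Nat.log 2 ⌈r⌉₊ + 1) : ℕ) : ℝ) := by exact_mod_cast h.le
    calc r ≤ (⌈r⌉₊ : ℝ) := h2
    _ ≤ ((2 ^ (Nat.log 2 ⌈r⌉₊ + 1) : ℕ) : ℝ) := h3
    _ = 2 ^ (Nat.log 2 ⌈r⌉₊ + 1) := by push_cast; ring
  · have h : ((2 ^ (Nat.log 2 ⌈r⌉₊) : ℕ) : ℝ) ≤ (⌈r⌉₊ : ℝ) := by
      exact_mod_cast Nat.pow_log_le_self 2 (by omega)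
    have h3 : (⌈r⌉₊ : ℝ) < r + 1 := Nat.ceil_lt_add_one (by linarith)
    have h4 : ((2:ℝ)) ^ (Nat.log 2 ⌈r⌉₊ + 1) = 2 * (2:ℝ) ^ (Nat.log 2 ⌈r⌉₊) := by ring
    rw [h4]
    have h5 : ((2:ℝ)) ^ (Nat.log 2 ⌈r⌉₊) ≤ (⌈r⌉₊ : ℝ) := by push_cast at h; exact h
    nlinarith

private lemma aux_poly_exp (m : ℕ) {v : ℝ} (hv : 0 ≤ v) :
    v ^ m * Real.exp (-v ^ 2 / 20) ≤ 20 ^ m * (m.factorial : ℝ) + 1 := by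
  have hexp : Real.exp (-v ^ 2 / 20) ≤ 1 := by
    rw [← Real.exp_zero]
    exact Real.exp_le_exp.mpr (div_nonpos_of_nonpos_of_nonneg (by nlinarith [sq_nonneg v]) (by norm_num))
  have hfac : (0:ℝ) < (m.factorial : ℝ) := by exact_mod_cast m.factorial_pos
  rcases le_total v 1 with h1 | h1
  · have hp : v ^ m ≤ 1 := pow_le_one₀ hv h1
    have hpn : 0 ≤ v ^ m := pow_nonneg hv m
    have : v ^ m * Real.exp (-v ^ 2 / 20) ≤ 1 := by
      calc v ^ m * Real.exp (-v ^ 2 / 20) ≤ 1 * 1 :=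
        mul_le_mul hp hexp (Real.exp_pos _).le one_pos.le
      _ = 1 := by ring
    nlinarith [pow_nonneg (by norm_num : (0:ℝ) ≤ 20) m]
  · have h2 : v ^ m ≤ (v ^ 2) ^ m := pow_le_pow_left₀ hv (by nlinarith) m
    have h3 : ((v ^ 2 / 20) ^ m) / (m.factorial : ℝ) ≤ Real.exp (v ^ 2 / 20) :=
      Real.pow_div_factorial_le_exp (x := v ^ 2 / 20) (by positivity) m
    have h3' : (v ^ 2 / 20) ^ m ≤ Real.exp (v ^ 2 / 20) * (m.factorial : ℝ) :=
      (div_le_iff₀ hfac).mp h3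
    have h4 : (v ^ 2) ^ m = 20 ^ m * (v ^ 2 / 20) ^ m := by
      rw [div_pow]; field_simp
    have h5 : Real.exp (v ^ 2 / 20) * Real.exp (-v ^ 2 / 20) = 1 := by
      rw [← Real.exp_add, show v ^ 2 / 20 + -v ^ 2 / 20 = 0 by ring, Real.exp_zero]
    calc v ^ m * Real.exp (-v ^ 2 / 20)
        ≤ (v ^ 2) ^ m * Real.exp (-v ^ 2 / 20) :=
          mul_le_mul_of_nonneg_right h2 (Real.exp_pos _).le
    _ ≤ (20 ^ m * (m.factorial : ℝ) * Real.exp (v ^ 2 / 20)) * Real.exp (-v ^ 2 / 20) := by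
        apply mul_le_mul_of_nonneg_right _ (Real.exp_pos _).le
        calc (v ^ 2) ^ m = 20 ^ m * (v ^ 2 / 20) ^ m := h4
        _ ≤ 20 ^ m * (Real.exp (v ^ 2 / 20) * (m.factorial : ℝ)) :=
            mul_le_mul_of_nonneg_left h3' (by positivity)
        _ = 20 ^ m * (m.factorial : ℝ) * Real.exp (v ^ 2 / 20) := by ring
    _ = 20 ^ m * (m.factorial : ℝ) := by rw [mul_assoc, h5, mul_one]
    _ ≤ 20 ^ m * (m.factorial : ℝ) + 1 := by linarith

private lemma aux_tendsto (m : ℕ) {c : ℝ} (hc : 0 < c) :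
    Tendsto (fun R : ℝ => R ^ m * Real.exp (-R ^ 2 / c)) atTop (nhds 0) := by
  apply squeeze_zero' (g := fun R : ℝ => R ^ m * Real.exp (-R))
  · filter_upwards [eventually_ge_atTop (0:ℝ)] with R hR
    positivity
  · filter_upwards [eventually_ge_atTop (max c 1)] with R hR
    have hR1 : 1 ≤ R := le_trans (le_max_right _ _) hR
    have hRc : c ≤ R := le_trans (le_max_left _ _) hR
    have h : -R ^ 2 / c ≤ -R := by
      rw [div_le_iff₀ hc]; nlinarith
    exact mul_le_mul_of_nonneg_left (Real.exp_le_exp.mpr h) (by positivity)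
  · exact tendsto_pow_mul_exp_neg_atTop_nhds_zero m

private lemma aux_summable (n : ℕ) :
    Summable (fun k : ℕ => Real.exp ((1 - 4 ^ k) / 10) * 2 ^ (n * (k + 1))) := by
  apply summable_of_ratio_norm_eventually_le (r := 1/2) (by norm_num)
  have key : ∀ᶠ k : ℕ in atTop, Real.exp (-(3 * (4:ℝ) ^ k / 10)) * (2:ℝ) ^ n ≤ 1/2 := by
    have h4 : Tendsto (fun k : ℕ => (4:ℝ) ^ k) atTop atTop :=
      tendsto_pow_atTop_atTop_of_one_lt (by norm_num)
    have l1 : Tendsto (fun x : ℝ => 3 * x / 10) atTop atTop :=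
      (tendsto_id.const_mul_atTop (by norm_num)).atTop_div_const (by norm_num)
    have l2 : Tendsto (fun k : ℕ => -(3 * (4:ℝ) ^ k / 10)) atTop atBot :=
      (tendsto_neg_atTop_atBot.comp l1).comp h4
    have ht : Tendsto (fun k : ℕ => Real.exp (-(3 * (4:ℝ) ^ k / 10)) * (2:ℝ) ^ n) atTop (nhds 0) := by
      have := (Real.tendsto_exp_atBot.comp l2).mul_const ((2:ℝ) ^ n)
      simpa using this
    exact ht.eventually_le_const (by norm_num)
  filter_upwards [key] with k hk
  have e1 : Real.exp ((1 - (4:ℝ) ^ (k+1)) / 10)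
      = Real.exp ((1 - (4:ℝ) ^ k) / 10) * Real.exp (-(3 * (4:ℝ) ^ k / 10)) := by
    rw [← Real.exp_add]
    congr 1
    rw [pow_succ]
    ring
  have e2 : (2:ℝ) ^ (n * (k + 1 + 1)) = 2 ^ (n * (k + 1)) * 2 ^ n := by
    rw [← pow_add]; congr 1; try ring
  rw [Real.norm_eq_abs, Real.norm_eq_abs, abs_of_pos (by positivity), abs_of_pos (by positivity)]
  calc Real.exp ((1 - (4:ℝ) ^ (k+1)) / 10) * 2 ^ (n * (k + 1 + 1))
      = (Real.exp ((1 - (4:ℝ) ^ k) / 10) * 2 ^ (n * (k + 1)))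
        * (Real.exp (-(3 * (4:ℝ) ^ k / 10)) * 2 ^ n) := by
        rw [e1, e2]; try ring
  _ ≤ (Real.exp ((1 - (4:ℝ) ^ k) / 10) * 2 ^ (n * (k + 1))) * (1/2) :=
      mul_le_mul_of_nonneg_left hk (by positivity)
  _ = 1/2 * (Real.exp ((1 - (4:ℝ) ^ k) / 10) * 2 ^ (n * (k + 1))) := by ring

theorem stmt16 {X : Type*} [MetricSpace X] [MeasurableSpace X]
    (ν : Measure X) (n : ℕ) (y : X) (T : ℝ) (hT : 0 < T)
    (p : X → ℝ → ℝ) (HR : ℝ → X → ℝ → ℝ) (MR : ℝ → ℝ) (C₀ : ℝ) (hC₀ : 0 < C₀)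
    (hMR : ∀ R : ℝ, MR R
      = sSup {v : ℝ | ∃ x t, dist x y = R ∧ 0 < t ∧ t ≤ T ∧ v = p x t})
    -- maximum-principle sandwich
    (hsand : ∀ R : ℝ, ∀ x ∈ closedBall y R, ∀ t : ℝ, 0 < t → t ≤ T →
      p x t - MR R ≤ HR R x t ∧ HR R x t ≤ p x t)
    (hout : ∀ R : ℝ, ∀ x, x ∉ closedBall y R → ∀ t : ℝ, HR R x t = 0)
    (hpnn : ∀ x t, 0 < t → 0 ≤ p x t)
    -- Gaussian upper bound
    (hgauss : ∀ x t, 0 < t →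
      p x t ≤ C₀ * ((ν (closedBall y (Real.sqrt t))).toReal)⁻¹
        * Real.exp (-(dist x y) ^ 2 / (5 * t)))
    -- doubling and normalization
    (hdouble : ∀ (x : X) (r : ℝ), 0 < r →
      ν (closedBall x (2 * r)) ≤ 2 ^ n * ν (closedBall x r))
    (hnorm : ν (closedBall y 1) = 1) :
    ∃ ε : ℝ → ℝ, Tendsto ε atTop (nhds 0) ∧
      ∀ R : ℝ, ∀ t : ℝ, 0 < t → t ≤ T →
        ∫ x, |HR R x t - p x t| ∂ν ≤ ε R := by
  classical
  -- iterated doubling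
  have hiter : ∀ (k : ℕ) (r : ℝ), 0 < r →
      ν (closedBall y ((2:ℝ) ^ k * r)) ≤ (2:ℝ≥0∞) ^ (n * k) * ν (closedBall y r) := by
    intro k
    induction k with
    | zero => intro r hr; simp
    | succ k ih =>
      intro r hr
      have h1 : ((2:ℝ) ^ (k+1) * r) = 2 * ((2:ℝ) ^ k * r) := by ring
      rw [h1]
      calc ν (closedBall y (2 * ((2:ℝ) ^ k * r)))
          ≤ 2 ^ n * ν (closedBall y ((2:ℝ) ^ k * r)) := hdouble y _ (by positivity)
      _ ≤ 2 ^ n * ((2:ℝ≥0∞) ^ (n * k) * ν (closedBall y r)) := mul_le_mul_right (ih r hr) _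
      _ = (2:ℝ≥0∞) ^ (n * (k+1)) * ν (closedBall y r) := by
          rw [← mul_assoc, ← pow_add]
          congr 2
          ring
  have hfin : ∀ r : ℝ, ν (closedBall y r) ≠ ⊤ := by
    intro r
    rcases le_total r 1 with h | h
    · have := (measure_mono (closedBall_subset_closedBall h)).trans_eq hnorm
      exact (this.trans_lt ENNReal.one_lt_top).ne
    · obtain ⟨k, hk1, _⟩ := aux_pow2 h
      have h2 : ν (closedBall y r) ≤ (2:ℝ≥0∞) ^ (n * k) * ν (closedBall y 1) := by
        refine le_trans (measure_mono (closedBall_subset_closedBall ?_)) (hiter k 1 one_pos)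
        rw [mul_one]; exact hk1
      rw [hnorm, mul_one] at h2
      exact (h2.trans_lt (ENNReal.pow_lt_top (by norm_num : (2:ℝ≥0∞) < ⊤))).ne
  have hν1 : (ν (closedBall y 1)).toReal = 1 := by rw [hnorm]; simp
  -- lower volume bound
  have hlow : ∀ s : ℝ, 0 < s → s ≤ 1 → (4⁻¹ * s) ^ n ≤ (ν (closedBall y s)).toReal := by
    intro s hs hs1
    obtain ⟨k, hk1, hk2⟩ := aux_pow2 (r := 1/s) (by rw [le_div_iff₀ hs, one_mul]; exact hs1)
    have h1 : (1:ℝ) ≤ 2 ^ k * s := by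
      rw [div_le_iff₀ hs] at hk1
      linarith
    have h4 : (1:ℝ≥0∞) ≤ (2:ℝ≥0∞) ^ (n * k) * ν (closedBall y s) := by
      calc (1:ℝ≥0∞) = ν (closedBall y 1) := hnorm.symm
      _ ≤ ν (closedBall y ((2:ℝ) ^ k * s)) := measure_mono (closedBall_subset_closedBall h1)
      _ ≤ (2:ℝ≥0∞) ^ (n * k) * ν (closedBall y s) := hiter k s hs
    have h5 : (1:ℝ) ≤ 2 ^ (n * k) * (ν (closedBall y s)).toReal := by
      have := ENNReal.toReal_mono
        (ENNReal.mul_ne_top (ENNReal.pow_ne_top (by norm_num)) (hfin s)) h4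
      simpa [ENNReal.toReal_mul, ENNReal.toReal_pow] using this
    have hk2' : (2:ℝ) ^ k * s ≤ 4 := by
      have := mul_le_mul_of_nonneg_right hk2 hs.le
      rw [mul_one_div, div_mul_cancel₀ _ hs.ne'] at this
      linarith
    have key : (4⁻¹ * s * 2 ^ k) ^ n ≤ 1 := by
      apply pow_le_one₀ (by positivity)
      nlinarith
    have e1 : (4⁻¹ * s) ^ n * (2:ℝ) ^ (n * k) = (4⁻¹ * s * 2 ^ k) ^ n := by
      rw [mul_comm n k, pow_mul, ← mul_pow]
    nlinarith [pow_pos (show (0:ℝ) < 2 by norm_num) (n * k),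
      pow_nonneg (show (0:ℝ) ≤ 4⁻¹ * s by positivity) n, ENNReal.toReal_nonneg
        (a := ν (closedBall y s))]
  have hνpos : ∀ r : ℝ, 0 < r → 0 < (ν (closedBall y r)).toReal := by
    intro r hr
    rcases le_total r 1 with h | h
    · have h1 := hlow r hr h
      have hp : (0:ℝ) < (4⁻¹ * r) ^ n := by positivity
      linarith
    · have h1 : (1:ℝ) ≤ (ν (closedBall y r)).toReal := by
        rw [← hν1]
        exact ENNReal.toReal_mono (hfin r) (measure_mono (closedBall_subset_closedBall h))
      linarith
  -- upper volume bound
  have hupp : ∀ r : ℝ, 1 ≤ r → (ν (closedBall y r)).toReal ≤ (4 * r) ^ n := by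
    intro r hr
    obtain ⟨k, hk1, hk2⟩ := aux_pow2 hr
    have h2 : ν (closedBall y r) ≤ (2:ℝ≥0∞) ^ (n * k) := by
      calc ν (closedBall y r) ≤ ν (closedBall y ((2:ℝ) ^ k * 1)) := by
            apply measure_mono (closedBall_subset_closedBall ?_)
            rw [mul_one]; exact hk1
      _ ≤ (2:ℝ≥0∞) ^ (n * k) * ν (closedBall y 1) := hiter k 1 one_pos
      _ = (2:ℝ≥0∞) ^ (n * k) := by rw [hnorm, mul_one]
    have h3 := ENNReal.toReal_mono (ENNReal.pow_ne_top (by norm_num)) h2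
    have h4 : ((2:ℝ≥0∞) ^ (n * k)).toReal = (2:ℝ) ^ (n * k) := by
      simp [ENNReal.toReal_pow]
    rw [h4] at h3
    calc (ν (closedBall y r)).toReal ≤ (2:ℝ) ^ (n * k) := h3
    _ = ((2:ℝ) ^ k) ^ n := by rw [mul_comm n k, pow_mul]
    _ ≤ (4 * r) ^ n := pow_le_pow_left₀ (by positivity) (by linarith) n
  -- Lemma A : Gaussian integral bound via annuli
  have hK : ∃ K : ℝ≥0∞, K ≠ ⊤ ∧ ∀ t : ℝ, 0 < t →
      ∫⁻ x, ENNReal.ofReal (Real.exp (-(dist x y) ^ 2 / (10 * t))) ∂ν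
        ≤ K * ν (closedBall y (Real.sqrt t)) := by
    have hw : Summable (fun k : ℕ => Real.exp ((1 - 4 ^ k) / 10) * 2 ^ (n * (k + 1))) :=
      aux_summable n
    refine ⟨ENNReal.ofReal (∑' k : ℕ, Real.exp ((1 - 4 ^ k) / 10) * 2 ^ (n * (k + 1))),
      ENNReal.ofReal_ne_top, ?_⟩
    intro t ht
    set s := Real.sqrt t with hsdef
    have hs0 : 0 < s := Real.sqrt_pos.mpr ht
    have hts : s ^ 2 = t := Real.sq_sqrt ht.le
    have hpt : ∀ x, ENNReal.ofReal (Real.exp (-(dist x y) ^ 2 / (10 * t)))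
        ≤ ∑' k : ℕ, (toMeasurable ν (closedBall y ((2:ℝ) ^ (k+1) * s))).indicator
            (fun _ => ENNReal.ofReal (Real.exp ((1 - 4 ^ k) / 10))) x := by
      intro x
      set d := dist x y with hd
      have hd0 : 0 ≤ d := dist_nonneg
      have hex : ∃ k : ℕ, d ≤ 2 ^ (k+1) * s := by
        obtain ⟨k, hk⟩ := pow_unbounded_of_one_lt (d / s) (by norm_num : (1:ℝ) < 2)
        refine ⟨k, ?_⟩
        have h1 : d < 2 ^ k * s := by
          rw [div_lt_iff₀ hs0] at hk
          linarith
        have h2 : (2:ℝ) ^ k * s ≤ 2 ^ (k+1) * s := by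
          apply mul_le_mul_of_nonneg_right _ hs0.le
          apply pow_le_pow_right₀ (by norm_num) (Nat.le_succ k)
        linarith
      have hk₀ := Nat.find_spec hex
      set k₀ := Nat.find hex with hk₀def
      have hbnd : Real.exp (-d ^ 2 / (10 * t)) ≤ Real.exp ((1 - 4 ^ k₀) / 10) := by
        apply Real.exp_le_exp.mpr
        rcases Nat.eq_zero_or_pos k₀ with h0 | hposk
        · rw [h0]
          norm_num
          apply div_nonpos_of_nonpos_of_nonneg (by nlinarith [sq_nonneg d]) (by linarith)
        · obtain ⟨k', hkk⟩ : ∃ k', k₀ = k' + 1 := ⟨k₀ - 1, by omega⟩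
          have hmin : ¬ d ≤ 2 ^ (k'+1) * s := by
            apply Nat.find_min hex
            omega
          push_neg at hmin
          have hsq : ((2:ℝ) ^ (k'+1)) ^ 2 = 4 ^ (k'+1) := by
            rw [← pow_mul, mul_comm (k'+1) 2, pow_mul]
            norm_num
          have h2 : (4:ℝ) ^ (k'+1) * t < d ^ 2 := by
            have hpos2 : (0:ℝ) < 2 ^ (k'+1) * s := by positivity
            have : ((2:ℝ) ^ (k'+1) * s) ^ 2 < d ^ 2 := by nlinarith
            calc (4:ℝ) ^ (k'+1) * t = ((2:ℝ) ^ (k'+1)) ^ 2 * s ^ 2 := by rw [hsq, hts]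
            _ = ((2:ℝ) ^ (k'+1) * s) ^ 2 := by ring
            _ < d ^ 2 := this
          rw [hkk, div_le_div_iff₀ (by linarith) (by norm_num)]
          nlinarith
      refine le_trans ?_ (ENNReal.le_tsum k₀)
      have hmem : x ∈ toMeasurable ν (closedBall y ((2:ℝ) ^ (k₀+1) * s)) :=
        subset_toMeasurable _ _ (mem_closedBall.mpr hk₀)
      rw [Set.indicator_of_mem hmem]
      exact ENNReal.ofReal_le_ofReal hbnd
    calc ∫⁻ x, ENNReal.ofReal (Real.exp (-(dist x y) ^ 2 / (10 * t))) ∂ν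
        ≤ ∫⁻ x, ∑' k : ℕ, (toMeasurable ν (closedBall y ((2:ℝ) ^ (k+1) * s))).indicator
            (fun _ => ENNReal.ofReal (Real.exp ((1 - 4 ^ k) / 10))) x ∂ν :=
          lintegral_mono hpt
    _ = ∑' k : ℕ, ∫⁻ x, (toMeasurable ν (closedBall y ((2:ℝ) ^ (k+1) * s))).indicator
            (fun _ => ENNReal.ofReal (Real.exp ((1 - 4 ^ k) / 10))) x ∂ν :=
          lintegral_tsum fun k =>
            (measurable_const.indicator (measurableSet_toMeasurable _ _)).aemeasurable
    _ = ∑' k : ℕ, ENNReal.ofReal (Real.exp ((1 - 4 ^ k) / 10))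
            * ν (closedBall y ((2:ℝ) ^ (k+1) * s)) := by
          refine tsum_congr fun k => ?_
          rw [lintegral_indicator_const (measurableSet_toMeasurable _ _),
            measure_toMeasurable]
    _ ≤ ∑' k : ℕ, ENNReal.ofReal (Real.exp ((1 - 4 ^ k) / 10))
            * ((2:ℝ≥0∞) ^ (n * (k+1)) * ν (closedBall y s)) :=
          ENNReal.tsum_le_tsum fun k => mul_le_mul_right (hiter (k+1) s hs0) _
    _ = (∑' k : ℕ, ENNReal.ofReal (Real.exp ((1 - 4 ^ k) / 10)) * (2:ℝ≥0∞) ^ (n * (k+1)))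
            * ν (closedBall y s) := by
          rw [← ENNReal.tsum_mul_right]
          exact tsum_congr fun k => (mul_assoc _ _ _).symm
    _ = ENNReal.ofReal (∑' k : ℕ, Real.exp ((1 - 4 ^ k) / 10) * 2 ^ (n * (k + 1)))
            * ν (closedBall y s) := by
          congr 1
          rw [ENNReal.ofReal_tsum_of_nonneg (fun k => by positivity) hw]
          refine tsum_congr fun k => ?_
          rw [ENNReal.ofReal_mul (Real.exp_nonneg _)]
          congr 1
          rw [ENNReal.ofReal_pow (by norm_num)]
          norm_num
  -- boundary maximum bound
  have hMRb : ∀ R : ℝ, 1 ≤ R → max (MR R) 0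
      ≤ C₀ * (4 ^ n * (20 ^ n * (n.factorial : ℝ) + 2)) * Real.exp (-R ^ 2 / (10 * T)) := by
    intro R hR
    have hb0 : (0:ℝ) ≤ C₀ * (4 ^ n * (20 ^ n * (n.factorial : ℝ) + 2))
        * Real.exp (-R ^ 2 / (10 * T)) := by positivity
    apply max_le _ hb0
    rw [hMR]
    apply Real.sSup_le _ hb0
    rintro v ⟨x, t, hdx, ht0, htT, rfl⟩
    have hg := hgauss x t ht0
    rw [hdx] at hg
    set s := Real.sqrt t with hsdef
    have hs0 : 0 < s := Real.sqrt_pos.mpr ht0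
    have hts : s ^ 2 = t := Real.sq_sqrt ht0.le
    set Q := ((ν (closedBall y s)).toReal)⁻¹ with hQdef
    have hQ0 : 0 ≤ Q := inv_nonneg.mpr ENNReal.toReal_nonneg
    have hsplit : Real.exp (-R ^ 2 / (5 * t))
        = Real.exp (-R ^ 2 / (10 * t)) * Real.exp (-R ^ 2 / (10 * t)) := by
      rw [← Real.exp_add]; congr 1; ring
    have hTt : Real.exp (-R ^ 2 / (10 * t)) ≤ Real.exp (-R ^ 2 / (10 * T)) := by
      apply Real.exp_le_exp.mpr
      rw [neg_div, neg_div, neg_le_neg_iff]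
      exact div_le_div_of_nonneg_left (sq_nonneg R) (by linarith) (by linarith)
    have hQe : Q * Real.exp (-R ^ 2 / (10 * t))
        ≤ 4 ^ n * (20 ^ n * (n.factorial : ℝ) + 2) := by
      rcases le_total s 1 with hs1 | hs1
      · have hl := hlow s hs0 hs1
        have hl0 : (0:ℝ) < (4⁻¹ * s) ^ n := by positivity
        have hQle : Q ≤ ((4⁻¹ * s) ^ n)⁻¹ := by
          rw [hQdef]
          exact inv_anti₀ hl0 hl
        have hid : ((4⁻¹ * s) ^ n)⁻¹ = 4 ^ n * (s ^ n)⁻¹ := by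
          rw [mul_pow, mul_inv, inv_pow, inv_inv]
        set v := R / s with hv
        have hv0 : 0 < v := div_pos (by linarith) hs0
        have hsn : (s ^ n)⁻¹ ≤ v ^ n := by
          rw [← inv_pow]
          apply pow_le_pow_left₀ (inv_nonneg.mpr hs0.le) _ n
          have he : s⁻¹ = v / R := by
            rw [hv]
            field_simp
          rw [he]
          exact div_le_self hv0.le hR
        have hexpv : Real.exp (-R ^ 2 / (10 * t)) = Real.exp (-v ^ 2 / 10) := by
          congr 1
          rw [hv, ← hts]
          field_simp
        have hee : Real.exp (-v ^ 2 / 10) ≤ Real.exp (-v ^ 2 / 20) := by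
          apply Real.exp_le_exp.mpr
          nlinarith [sq_nonneg v]
        calc Q * Real.exp (-R ^ 2 / (10 * t))
            ≤ (4 ^ n * (s ^ n)⁻¹) * Real.exp (-R ^ 2 / (10 * t)) :=
              mul_le_mul_of_nonneg_right (hQle.trans_eq hid) (Real.exp_pos _).le
        _ = (4 ^ n * (s ^ n)⁻¹) * Real.exp (-v ^ 2 / 10) := by rw [hexpv]
        _ ≤ (4 ^ n * v ^ n) * Real.exp (-v ^ 2 / 10) :=
              mul_le_mul_of_nonneg_right
                (mul_le_mul_of_nonneg_left hsn (by positivity)) (Real.exp_pos _).le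
        _ ≤ (4 ^ n * v ^ n) * Real.exp (-v ^ 2 / 20) :=
              mul_le_mul_of_nonneg_left hee (by positivity)
        _ = 4 ^ n * (v ^ n * Real.exp (-v ^ 2 / 20)) := by ring
        _ ≤ 4 ^ n * (20 ^ n * (n.factorial : ℝ) + 1) :=
              mul_le_mul_of_nonneg_left (aux_poly_exp n hv0.le) (by positivity)
        _ ≤ 4 ^ n * (20 ^ n * (n.factorial : ℝ) + 2) := by
              have h4n : (0:ℝ) < 4 ^ n := by positivity
              nlinarith
      · have h1 : (1:ℝ) ≤ (ν (closedBall y s)).toReal := by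
          rw [← hν1]
          exact ENNReal.toReal_mono (hfin s) (measure_mono (closedBall_subset_closedBall hs1))
        have hQ1 : Q ≤ 1 := by
          rw [hQdef]
          exact inv_le_one_of_one_le₀ h1
        have he1 : Real.exp (-R ^ 2 / (10 * t)) ≤ 1 := by
          rw [← Real.exp_zero]
          apply Real.exp_le_exp.mpr
          apply div_nonpos_of_nonpos_of_nonneg (by nlinarith [sq_nonneg R]) (by linarith)
        have h4n : (1:ℝ) ≤ 4 ^ n := one_le_pow₀ (by norm_num)
        have hfn : (0:ℝ) ≤ 20 ^ n * (n.factorial : ℝ) := by positivity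
        calc Q * Real.exp (-R ^ 2 / (10 * t)) ≤ 1 * 1 :=
              mul_le_mul hQ1 he1 (Real.exp_pos _).le one_pos.le
        _ ≤ 4 ^ n * (20 ^ n * (n.factorial : ℝ) + 2) := by nlinarith
    calc p x t ≤ C₀ * Q * Real.exp (-R ^ 2 / (5 * t)) := hg
    _ = C₀ * (Q * Real.exp (-R ^ 2 / (10 * t))) * Real.exp (-R ^ 2 / (10 * t)) := by
        rw [hsplit]; ring
    _ ≤ C₀ * (4 ^ n * (20 ^ n * (n.factorial : ℝ) + 2)) * Real.exp (-R ^ 2 / (10 * t)) :=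
        mul_le_mul_of_nonneg_right (mul_le_mul_of_nonneg_left hQe hC₀.le) (Real.exp_pos _).le
    _ ≤ C₀ * (4 ^ n * (20 ^ n * (n.factorial : ℝ) + 2)) * Real.exp (-R ^ 2 / (10 * T)) :=
        mul_le_mul_of_nonneg_left hTt (by positivity)
  obtain ⟨K, hKtop, hKle⟩ := hK
  refine ⟨fun R => max (MR R) 0 * (ν (closedBall y R)).toReal
      + C₀ * K.toReal * (if 1 ≤ R then Real.exp (-R ^ 2 / (10 * T)) else 1), ?_, ?_⟩
  · -- Tendsto
    have h1 : Tendsto (fun R : ℝ => max (MR R) 0 * (ν (closedBall y R)).toReal)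
        atTop (nhds 0) := by
      apply squeeze_zero'
        (g := fun R : ℝ => (C₀ * (4 ^ n * (20 ^ n * (n.factorial : ℝ) + 2))
          * Real.exp (-R ^ 2 / (10 * T))) * (4 * R) ^ n)
      · filter_upwards with R
        exact mul_nonneg (le_max_right _ _) ENNReal.toReal_nonneg
      · filter_upwards [eventually_ge_atTop (1:ℝ)] with R hR
        exact mul_le_mul (hMRb R hR) (hupp R hR) ENNReal.toReal_nonneg (by positivity)
      · have h := (aux_tendsto n (show (0:ℝ) < 10 * T by linarith)).const_mul
          (C₀ * (4 ^ n * (20 ^ n * (n.factorial : ℝ) + 2)) * 4 ^ n)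
        rw [mul_zero] at h
        apply h.congr
        intro R
        ring
    have h2 : Tendsto (fun R : ℝ => C₀ * K.toReal
        * (if 1 ≤ R then Real.exp (-R ^ 2 / (10 * T)) else 1)) atTop (nhds 0) := by
      have hbase : Tendsto (fun R : ℝ => Real.exp (-R ^ 2 / (10 * T))) atTop (nhds 0) := by
        apply Real.tendsto_exp_atBot.comp
        have hsq : Tendsto (fun R : ℝ => R ^ 2 / (10 * T)) atTop atTop :=
          (tendsto_pow_atTop two_ne_zero).atTop_div_const (by linarith)
        have := tendsto_neg_atTop_atBot.comp hsq
        apply this.congr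
        intro R
        simp [neg_div]
      have h := hbase.const_mul (C₀ * K.toReal)
      rw [mul_zero] at h
      apply h.congr'
      filter_upwards [eventually_ge_atTop (1:ℝ)] with R hR
      rw [if_pos hR]
    have := h1.add h2
    simpa using this
  · -- the inequality
    intro R t ht0 htT
    by_cases hfint : Integrable (fun x => |HR R x t - p x t|) ν
    swap
    · rw [integral_undef hfint]
      apply add_nonneg (mul_nonneg (le_max_right _ _) ENNReal.toReal_nonneg)
      apply mul_nonneg (mul_nonneg hC₀.le ENNReal.toReal_nonneg)
      split_ifs
      exacts [(Real.exp_pos _).le, zero_le_one]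
    set s := Real.sqrt t with hsdef
    have hs0 : 0 < s := Real.sqrt_pos.mpr ht0
    set Q := ((ν (closedBall y s)).toReal)⁻¹ with hQdef
    have hQpos : 0 < (ν (closedBall y s)).toReal := hνpos s hs0
    have hQ0 : 0 ≤ Q := inv_nonneg.mpr ENNReal.toReal_nonneg
    set τ : ℝ := if 1 ≤ R then Real.exp (-R ^ 2 / (10 * T)) else 1 with hτdef
    have hτ0 : 0 < τ := by
      rw [hτdef]
      split_ifs
      exacts [Real.exp_pos _, one_pos]
    set M : ℝ := max (MR R) 0 with hMdef
    have hM0 : (0:ℝ) ≤ M := le_max_right _ _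
    set S := toMeasurable ν (closedBall y R) with hSdef
    have hptw : ∀ x, ENNReal.ofReal |HR R x t - p x t|
        ≤ S.indicator (fun _ => ENNReal.ofReal M) x
          + ENNReal.ofReal (C₀ * Q * τ * Real.exp (-(dist x y) ^ 2 / (10 * t))) := by
      intro x
      by_cases hx : x ∈ closedBall y R
      · obtain ⟨h1, h2⟩ := hsand R x hx t ht0 htT
        have habs : |HR R x t - p x t| ≤ M := by
          rw [abs_of_nonpos (by linarith)]
          refine le_trans (by linarith) (le_max_left _ _)
        calc ENNReal.ofReal |HR R x t - p x t| ≤ ENNReal.ofReal M :=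
              ENNReal.ofReal_le_ofReal habs
        _ = S.indicator (fun _ => ENNReal.ofReal M) x := by
              rw [hSdef, Set.indicator_of_mem (subset_toMeasurable ν _ hx)]
        _ ≤ _ := le_add_right le_rfl
      · have hHR := hout R x hx t
        have hd : R < dist x y := by rwa [mem_closedBall, not_le] at hx
        have hpx := hpnn x t ht0
        have habs2 : |HR R x t - p x t| = p x t := by
          rw [hHR, zero_sub, abs_neg, abs_of_nonneg hpx]
        have hgx := hgauss x t ht0
        rw [← hsdef, ← hQdef] at hgx
        have hebound : Real.exp (-(dist x y) ^ 2 / (5 * t))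
            ≤ τ * Real.exp (-(dist x y) ^ 2 / (10 * t)) := by
          have hsplit : Real.exp (-(dist x y) ^ 2 / (5 * t))
              = Real.exp (-(dist x y) ^ 2 / (10 * t))
                * Real.exp (-(dist x y) ^ 2 / (10 * t)) := by
            rw [← Real.exp_add]; congr 1; ring
          rw [hsplit, mul_comm (Real.exp (-(dist x y) ^ 2 / (10 * t)))]
          apply mul_le_mul_of_nonneg_right _ (Real.exp_pos _).le
          rw [hτdef]
          split_ifs with hR1
          · apply Real.exp_le_exp.mpr
            have hdR : R ^ 2 ≤ (dist x y) ^ 2 := by nlinarith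
            calc -(dist x y) ^ 2 / (10 * t) ≤ -R ^ 2 / (10 * t) := by
                  apply (div_le_div_iff_of_pos_right (by linarith : (0:ℝ) < 10 * t)).mpr
                  linarith
            _ ≤ -R ^ 2 / (10 * T) := by
                  rw [neg_div, neg_div, neg_le_neg_iff]
                  exact div_le_div_of_nonneg_left (sq_nonneg R) (by linarith) (by linarith)
          · rw [← Real.exp_zero]
            apply Real.exp_le_exp.mpr
            apply div_nonpos_of_nonpos_of_nonneg
              (by nlinarith [sq_nonneg (dist x y)]) (by linarith)
        have hp2 : p x t ≤ C₀ * Q * τ * Real.exp (-(dist x y) ^ 2 / (10 * t)) := by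
          calc p x t ≤ C₀ * Q * Real.exp (-(dist x y) ^ 2 / (5 * t)) := hgx
          _ ≤ C₀ * Q * (τ * Real.exp (-(dist x y) ^ 2 / (10 * t))) :=
              mul_le_mul_of_nonneg_left hebound (by positivity)
          _ = _ := by ring
        calc ENNReal.ofReal |HR R x t - p x t| = ENNReal.ofReal (p x t) := by rw [habs2]
        _ ≤ ENNReal.ofReal (C₀ * Q * τ * Real.exp (-(dist x y) ^ 2 / (10 * t))) :=
            ENNReal.ofReal_le_ofReal hp2
        _ ≤ _ := le_add_left le_rfl
    have hmeas : Measurable (S.indicator (fun _ => ENNReal.ofReal M)) :=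
      measurable_const.indicator (measurableSet_toMeasurable _ _)
    have hlin : ∫⁻ x, ENNReal.ofReal |HR R x t - p x t| ∂ν
        ≤ ENNReal.ofReal M * ν (closedBall y R) + ENNReal.ofReal (C₀ * τ) * K := by
      calc ∫⁻ x, ENNReal.ofReal |HR R x t - p x t| ∂ν
          ≤ ∫⁻ x, (S.indicator (fun _ => ENNReal.ofReal M) x
              + ENNReal.ofReal (C₀ * Q * τ * Real.exp (-(dist x y) ^ 2 / (10 * t)))) ∂ν :=
            lintegral_mono hptw
      _ = ∫⁻ x, S.indicator (fun _ => ENNReal.ofReal M) x ∂ν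
            + ∫⁻ x, ENNReal.ofReal (C₀ * Q * τ * Real.exp (-(dist x y) ^ 2 / (10 * t))) ∂ν :=
            lintegral_add_left hmeas _
      _ = ENNReal.ofReal M * ν (closedBall y R)
            + ∫⁻ x, ENNReal.ofReal (C₀ * Q * τ * Real.exp (-(dist x y) ^ 2 / (10 * t))) ∂ν := by
            rw [lintegral_indicator_const (measurableSet_toMeasurable _ _),
              measure_toMeasurable]
      _ ≤ ENNReal.ofReal M * ν (closedBall y R) + ENNReal.ofReal (C₀ * τ) * K := by
            refine add_le_add le_rfl ?_
            have hsplitr : ∀ x : X, ENNReal.ofReal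
                  (C₀ * Q * τ * Real.exp (-(dist x y) ^ 2 / (10 * t)))
                = ENNReal.ofReal (C₀ * Q * τ)
                  * ENNReal.ofReal (Real.exp (-(dist x y) ^ 2 / (10 * t))) :=
              fun x => ENNReal.ofReal_mul (by positivity)
            calc ∫⁻ x, ENNReal.ofReal (C₀ * Q * τ * Real.exp (-(dist x y) ^ 2 / (10 * t))) ∂ν
                = ∫⁻ x, ENNReal.ofReal (C₀ * Q * τ)
                    * ENNReal.ofReal (Real.exp (-(dist x y) ^ 2 / (10 * t))) ∂ν := by
                  simp_rw [hsplitr]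
            _ = ENNReal.ofReal (C₀ * Q * τ)
                  * ∫⁻ x, ENNReal.ofReal (Real.exp (-(dist x y) ^ 2 / (10 * t))) ∂ν :=
                  lintegral_const_mul' _ _ ENNReal.ofReal_ne_top
            _ ≤ ENNReal.ofReal (C₀ * Q * τ) * (K * ν (closedBall y s)) := by
                  apply mul_le_mul_right
                  rw [hsdef]
                  exact hKle t ht0
            _ = ENNReal.ofReal (C₀ * τ) * K * (ENNReal.ofReal Q * ν (closedBall y s)) := by
                  rw [show C₀ * Q * τ = C₀ * τ * Q by ring,
                    ENNReal.ofReal_mul (mul_nonneg hC₀.le hτ0.le)]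
                  ring
            _ = ENNReal.ofReal (C₀ * τ) * K := by
                  have hone : ENNReal.ofReal Q * ν (closedBall y s) = 1 := by
                    nth_rewrite 1 [← ENNReal.ofReal_toReal (hfin s)]
                    rw [← ENNReal.ofReal_mul hQ0, hQdef,
                      inv_mul_cancel₀ hQpos.ne', ENNReal.ofReal_one]
                  rw [hone, mul_one]
    have hrhs_ne : ENNReal.ofReal M * ν (closedBall y R)
        + ENNReal.ofReal (C₀ * τ) * K ≠ ⊤ :=
      ENNReal.add_ne_top.mpr ⟨ENNReal.mul_ne_top ENNReal.ofReal_ne_top (hfin R),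
        ENNReal.mul_ne_top ENNReal.ofReal_ne_top hKtop⟩
    have heq : ∫ x, |HR R x t - p x t| ∂ν
        = (∫⁻ x, ENNReal.ofReal |HR R x t - p x t| ∂ν).toReal :=
      integral_eq_lintegral_of_nonneg_ae (ae_of_all _ fun x => abs_nonneg _)
        hfint.aestronglyMeasurable
    rw [heq]
    refine le_trans (ENNReal.toReal_mono hrhs_ne hlin) ?_
    rw [ENNReal.toReal_add (ENNReal.mul_ne_top ENNReal.ofReal_ne_top (hfin R))
        (ENNReal.mul_ne_top ENNReal.ofReal_ne_top hKtop),
      ENNReal.toReal_mul, ENNReal.toReal_mul, ENNReal.toReal_ofReal hM0,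
      ENNReal.toReal_ofReal (mul_nonneg hC₀.le hτ0.le)]
    exact le_of_eq (by ring)
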